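/- Let y₁,…,yₙ ∈ ℝ^d and let w⁽¹⁾, w⁽²⁾ ∈ ℝⁿ be probability weight vectors (nonnegative entries summing to 1). For a probability weight vector w, let x_w = ∑_{i=1}^{n} wᵢ yᵢ and Σ_w = ∑_{i=1}^{n} wᵢ (yᵢ − x_w)(yᵢ − x_w)ᵀ. If the total variation distance TV(w⁽¹⁾, w⁽²⁾) = (1/2)∑_{i=1}^{n}|w⁽¹⁾ᵢ − w⁽²⁾ᵢ| satisfies TV(w⁽¹⁾, w⁽²⁾) ≤ ζ < 1, then ‖x_{w⁽¹⁾} − x_{w⁽²⁾}‖₂ ≤ ( √(λmax(Σ_{w⁽¹⁾})) + √(λmax(Σ_{w⁽²⁾})) )·√( ζ/(1 − ζ) ). -/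

import Mathlib

open MeasureTheory Real
open scoped BigOperators RealInnerProductSpace Classical

/-- `λmax (∑ i, w i • (y i - x) (y i - x)ᵀ)`, expressed as the supremum of the
associated quadratic form over the unit sphere. -/
noncomputable def lamMax {n d : ℕ} (w : Fin n → ℝ)
    (y : Fin n → EuclideanSpace ℝ (Fin d)) (x : EuclideanSpace ℝ (Fin d)) : ℝ :=
  ⨆ v : Metric.sphere (0 : EuclideanSpace ℝ (Fin d)) 1,
    ∑ i, w i * (⟪y i - x, (v : EuclideanSpace ℝ (Fin d))⟫) ^ 2

/-- Weighted Cauchy–Schwarz. -/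
lemma cs_weighted {n : ℕ} (a f : Fin n → ℝ) (ha : ∀ i, 0 ≤ a i) :
    (∑ i, a i * f i) ^ 2 ≤ (∑ i, a i) * ∑ i, a i * f i ^ 2 := by
  have h := Finset.sum_mul_sq_le_sq_mul_sq Finset.univ
      (fun i => Real.sqrt (a i)) (fun i => Real.sqrt (a i) * f i)
  have h1 : ∀ i : Fin n, Real.sqrt (a i) * (Real.sqrt (a i) * f i) = a i * f i := by
    intro i; rw [← mul_assoc, Real.mul_self_sqrt (ha i)]
  have h2 : ∀ i : Fin n, (Real.sqrt (a i)) ^ 2 = a i := fun i => Real.sq_sqrt (ha i)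
  have h3 : ∀ i : Fin n, (Real.sqrt (a i) * f i) ^ 2 = a i * f i ^ 2 := by
    intro i; rw [mul_pow, Real.sq_sqrt (ha i)]
  simpa only [h1, h2, h3] using h

/-- Key scalar inequality. -/
lemma scalar_key {n : ℕ} (w m f : Fin n → ℝ) (hm0 : ∀ i, 0 ≤ m i) (hmw : ∀ i, m i ≤ w i)
    (h0 : ∑ i, w i * f i = 0) {t : ℝ} (ht : ∑ i, (w i - m i) = t) (hm : ∑ i, m i = 1 - t) :
    (∑ i, (w i - m i) * f i) ^ 2 ≤ t * (1 - t) * ∑ i, w i * f i ^ 2 := by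
  have ht0 : 0 ≤ t := ht ▸ Finset.sum_nonneg (fun i _ => sub_nonneg.2 (hmw i))
  have h1t : 0 ≤ 1 - t := hm ▸ Finset.sum_nonneg (fun i _ => hm0 i)
  have hsplit : ∑ i, (w i - m i) * f i = - ∑ i, m i * f i := by
    have : ∑ i, (w i - m i) * f i = (∑ i, w i * f i) - ∑ i, m i * f i := by
      rw [← Finset.sum_sub_distrib]; exact Finset.sum_congr rfl (fun i _ => by ring)
    rw [this, h0]; ring
  have hA' := cs_weighted (fun i => w i - m i) f (fun i => sub_nonneg.2 (hmw i))
  have hA : (∑ i, (w i - m i) * f i) ^ 2 ≤ t * ∑ i, (w i - m i) * f i ^ 2 := by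
    rw [← ht]; simpa using hA'
  have hB := cs_weighted m f hm0
  rw [hm] at hB
  have hABsum : (∑ i, (w i - m i) * f i ^ 2) + ∑ i, m i * f i ^ 2 = ∑ i, w i * f i ^ 2 := by
    rw [← Finset.sum_add_distrib]; exact Finset.sum_congr rfl (fun i _ => by ring)
  have hB' : (∑ i, (w i - m i) * f i) ^ 2 ≤ (1 - t) * ∑ i, m i * f i ^ 2 := by
    rw [hsplit, neg_sq]; exact hB
  rw [← hABsum]
  nlinarith [mul_le_mul_of_nonneg_left hA h1t, mul_le_mul_of_nonneg_left hB' ht0]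

/-- The quadratic form at a unit vector is at most `lamMax`. -/
lemma quad_le_lamMax {n d : ℕ} (w : Fin n → ℝ) (y : Fin n → EuclideanSpace ℝ (Fin d))
    (x v : EuclideanSpace ℝ (Fin d)) (hv : ‖v‖ = 1) :
    ∑ i, w i * (⟪y i - x, v⟫) ^ 2 ≤ lamMax w y x := by
  have hcont : Continuous fun u : EuclideanSpace ℝ (Fin d) =>
      ∑ i, w i * (⟪y i - x, u⟫) ^ 2 := by
    apply continuous_finset_sum
    intro i _
    exact continuous_const.mul ((continuous_const.inner continuous_id).pow 2)
  have hb : BddAbove (Set.range fun u : Metric.sphere (0 : EuclideanSpace ℝ (Fin d)) 1 =>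
      ∑ i, w i * (⟪y i - x, (u : EuclideanSpace ℝ (Fin d))⟫) ^ 2) := by
    have := (isCompact_sphere (0 : EuclideanSpace ℝ (Fin d)) 1).bddAbove_image
      hcont.continuousOn
    rwa [Set.image_eq_range] at this
  exact le_ciSup hb ⟨v, by simpa [mem_sphere_zero_iff_norm] using hv⟩

/-- Centering: the weighted mean of inner products around the weighted mean is zero. -/
lemma centered_sum_zero {n d : ℕ} (w : Fin n → ℝ) (y : Fin n → EuclideanSpace ℝ (Fin d))
    (hs : ∑ i, w i = 1) (v : EuclideanSpace ℝ (Fin d)) :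
    ∑ i, w i * (⟪y i - ∑ j, w j • y j, v⟫) = 0 := by
  have : ∑ i, w i * (⟪y i - ∑ j, w j • y j, v⟫) =
      ⟪∑ i, w i • (y i - ∑ j, w j • y j), v⟫ := by
    rw [sum_inner]
    exact Finset.sum_congr rfl (fun i _ => (real_inner_smul_left _ _ _).symm)
  rw [this]
  have hz : ∑ i, w i • (y i - ∑ j, w j • y j) = 0 := by
    simp only [smul_sub]
    rw [Finset.sum_sub_distrib, ← Finset.sum_smul, hs, one_smul, sub_self]
  rw [hz, inner_zero_left]

set_option maxHeartbeats 1000000 in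
/-- if two probability weight vectors are close in total variation,
their weighted means are close (Lemma 2.2 of Zhu et al.). Here
`x_w = ∑ i, w i • y i` and `Σ_w` is the weighted covariance matrix around `x_w`. -/
theorem close_weights_close_means {n d : ℕ}
    (y : Fin n → EuclideanSpace ℝ (Fin d)) (w₁ w₂ : Fin n → ℝ)
    (hw₁ : ∀ i, 0 ≤ w₁ i) (hs₁ : ∑ i, w₁ i = 1)
    (hw₂ : ∀ i, 0 ≤ w₂ i) (hs₂ : ∑ i, w₂ i = 1)
    (ζ : ℝ) (hζ1 : ζ < 1)
    (hTV : (1/2) * ∑ i, |w₁ i - w₂ i| ≤ ζ) :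
    ‖(∑ i, w₁ i • y i) - ∑ i, w₂ i • y i‖ ≤
      (Real.sqrt (lamMax w₁ y (∑ i, w₁ i • y i)) +
        Real.sqrt (lamMax w₂ y (∑ i, w₂ i • y i))) * Real.sqrt (ζ / (1 - ζ)) := by
  set x₁ := ∑ i, w₁ i • y i with hx₁
  set x₂ := ∑ i, w₂ i • y i with hx₂
  set L₁ := lamMax w₁ y x₁ with hL₁
  set L₂ := lamMax w₂ y x₂ with hL₂
  have hRHSnn : 0 ≤ (Real.sqrt L₁ + Real.sqrt L₂) * Real.sqrt (ζ / (1 - ζ)) :=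
    mul_nonneg (by positivity) (Real.sqrt_nonneg _)
  by_cases hD : x₁ - x₂ = 0
  · rw [hD, norm_zero]; exact hRHSnn
  -- setup
  set t := (1/2) * ∑ i, |w₁ i - w₂ i| with ht_def
  have ht0 : 0 ≤ t := by positivity
  have htζ : t ≤ ζ := hTV
  have ht1 : t < 1 := lt_of_le_of_lt htζ hζ1
  have h1t0 : (0:ℝ) ≤ 1 - t := by linarith
  have htt : (0:ℝ) ≤ t * (1 - t) := mul_nonneg ht0 h1t0
  set m := fun i => min (w₁ i) (w₂ i) with hm_def
  have hm0 : ∀ i, 0 ≤ m i := fun i => le_min (hw₁ i) (hw₂ i)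
  have hmw₁ : ∀ i, m i ≤ w₁ i := fun i => min_le_left _ _
  have hmw₂ : ∀ i, m i ≤ w₂ i := fun i => min_le_right _ _
  have hp_eq : ∀ i, w₁ i - m i = ((w₁ i - w₂ i) + |w₁ i - w₂ i|) / 2 := by
    intro i
    rcases le_total (w₁ i) (w₂ i) with h | h
    · have hmi : m i = w₁ i := min_eq_left h
      rw [hmi, abs_of_nonpos (by linarith : w₁ i - w₂ i ≤ 0)]; ring
    · have hmi : m i = w₂ i := min_eq_right h
      rw [hmi, abs_of_nonneg (by linarith : (0:ℝ) ≤ w₁ i - w₂ i)]; ring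
  have hq_eq : ∀ i, w₂ i - m i = ((w₂ i - w₁ i) + |w₁ i - w₂ i|) / 2 := by
    intro i
    rcases le_total (w₁ i) (w₂ i) with h | h
    · have hmi : m i = w₁ i := min_eq_left h
      rw [hmi, abs_of_nonpos (by linarith : w₁ i - w₂ i ≤ 0)]; ring
    · have hmi : m i = w₂ i := min_eq_right h
      rw [hmi, abs_of_nonneg (by linarith : (0:ℝ) ≤ w₁ i - w₂ i)]; ring
  have hsub : ∑ i, (w₁ i - w₂ i) = 0 := by
    rw [Finset.sum_sub_distrib, hs₁, hs₂, sub_self]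
  have hsub' : ∑ i, (w₂ i - w₁ i) = 0 := by
    rw [Finset.sum_sub_distrib, hs₁, hs₂, sub_self]
  have hsp : ∑ i, (w₁ i - m i) = t := by
    calc ∑ i, (w₁ i - m i) = ∑ i, ((w₁ i - w₂ i) + |w₁ i - w₂ i|) / 2 :=
          Finset.sum_congr rfl (fun i _ => hp_eq i)
      _ = ((∑ i, (w₁ i - w₂ i)) + ∑ i, |w₁ i - w₂ i|) / 2 := by
          rw [← Finset.sum_div, Finset.sum_add_distrib]
      _ = t := by rw [hsub, ht_def]; ring
  have hsq : ∑ i, (w₂ i - m i) = t := by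
    calc ∑ i, (w₂ i - m i) = ∑ i, ((w₂ i - w₁ i) + |w₁ i - w₂ i|) / 2 :=
          Finset.sum_congr rfl (fun i _ => hq_eq i)
      _ = ((∑ i, (w₂ i - w₁ i)) + ∑ i, |w₁ i - w₂ i|) / 2 := by
          rw [← Finset.sum_div, Finset.sum_add_distrib]
      _ = t := by rw [hsub', ht_def]; ring
  have hsm : ∑ i, m i = 1 - t := by
    have : ∑ i, (w₁ i - m i) = (∑ i, w₁ i) - ∑ i, m i := Finset.sum_sub_distrib _ _
    rw [this, hs₁] at hsp; linarith
  -- the unit vector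
  set D := x₁ - x₂ with hD_def
  have hDnorm : 0 < ‖D‖ := norm_pos_iff.mpr hD
  set v := ‖D‖⁻¹ • D with hv_def
  have hv : ‖v‖ = 1 := by
    rw [hv_def, norm_smul, norm_inv, norm_norm, inv_mul_cancel₀ (ne_of_gt hDnorm)]
  have hDv : ⟪D, v⟫ = ‖D‖ := by
    rw [hv_def, real_inner_smul_right, real_inner_self_eq_norm_mul_norm,
      ← mul_assoc, inv_mul_cancel₀ (ne_of_gt hDnorm), one_mul]
  set f₁ := fun i => (⟪y i - x₁, v⟫ : ℝ) with hf₁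
  set f₂ := fun i => (⟪y i - x₂, v⟫ : ℝ) with hf₂
  have hz₁ : ∑ i, w₁ i * f₁ i = 0 := centered_sum_zero w₁ y hs₁ v
  have hz₂ : ∑ i, w₂ i * f₂ i = 0 := centered_sum_zero w₂ y hs₂ v
  -- key identity
  have hdiff : ∀ i, f₂ i - f₁ i = ⟪D, v⟫ := by
    intro i
    rw [hf₂, hf₁, ← inner_sub_left]
    congr 1
    rw [hD_def]; abel
  have hkey : (∑ i, (w₁ i - m i) * f₁ i) - (∑ i, (w₂ i - m i) * f₂ i) = (1 - t) * ‖D‖ := by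
    have e₁ : ∑ i, (w₁ i - m i) * f₁ i = - ∑ i, m i * f₁ i := by
      have : ∑ i, (w₁ i - m i) * f₁ i = (∑ i, w₁ i * f₁ i) - ∑ i, m i * f₁ i := by
        rw [← Finset.sum_sub_distrib]; exact Finset.sum_congr rfl (fun i _ => by ring)
      rw [this, hz₁]; ring
    have e₂ : ∑ i, (w₂ i - m i) * f₂ i = - ∑ i, m i * f₂ i := by
      have : ∑ i, (w₂ i - m i) * f₂ i = (∑ i, w₂ i * f₂ i) - ∑ i, m i * f₂ i := by
        rw [← Finset.sum_sub_distrib]; exact Finset.sum_congr rfl (fun i _ => by ring)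
      rw [this, hz₂]; ring
    have e₃ : (∑ i, m i * f₂ i) - ∑ i, m i * f₁ i = (1 - t) * ‖D‖ := by
      have : (∑ i, m i * f₂ i) - ∑ i, m i * f₁ i = ∑ i, m i * (f₂ i - f₁ i) := by
        rw [← Finset.sum_sub_distrib]; exact Finset.sum_congr rfl (fun i _ => by ring)
      rw [this]
      have : ∑ i, m i * (f₂ i - f₁ i) = ∑ i, m i * ‖D‖ := by
        exact Finset.sum_congr rfl (fun i _ => by rw [hdiff i, hDv])
      rw [this, ← Finset.sum_mul, hsm]
    rw [e₁, e₂]; linarith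
  -- the CS bounds
  set S₁ := ∑ i, w₁ i * f₁ i ^ 2 with hS₁
  set S₂ := ∑ i, w₂ i * f₂ i ^ 2 with hS₂
  have hS₁nn : 0 ≤ S₁ := Finset.sum_nonneg fun i _ => mul_nonneg (hw₁ i) (sq_nonneg _)
  have hS₂nn : 0 ≤ S₂ := Finset.sum_nonneg fun i _ => mul_nonneg (hw₂ i) (sq_nonneg _)
  have hk₁ := scalar_key w₁ m f₁ hm0 hmw₁ hz₁ hsp hsm
  have hk₂ := scalar_key w₂ m f₂ hm0 hmw₂ hz₂ hsq hsm
  have habs₁ : |∑ i, (w₁ i - m i) * f₁ i| ≤ Real.sqrt (t * (1 - t)) * Real.sqrt S₁ := by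
    rw [← Real.sqrt_sq_eq_abs, ← Real.sqrt_mul htt]
    exact Real.sqrt_le_sqrt hk₁
  have habs₂ : |∑ i, (w₂ i - m i) * f₂ i| ≤ Real.sqrt (t * (1 - t)) * Real.sqrt S₂ := by
    rw [← Real.sqrt_sq_eq_abs, ← Real.sqrt_mul htt]
    exact Real.sqrt_le_sqrt hk₂
  have hS₁L : Real.sqrt S₁ ≤ Real.sqrt L₁ :=
    Real.sqrt_le_sqrt (quad_le_lamMax w₁ y x₁ v hv)
  have hS₂L : Real.sqrt S₂ ≤ Real.sqrt L₂ :=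
    Real.sqrt_le_sqrt (quad_le_lamMax w₂ y x₂ v hv)
  -- combine
  have hmain : (1 - t) * ‖D‖ ≤ Real.sqrt (t * (1 - t)) * (Real.sqrt L₁ + Real.sqrt L₂) := by
    have h1 : (1 - t) * ‖D‖ ≤ |∑ i, (w₁ i - m i) * f₁ i| + |∑ i, (w₂ i - m i) * f₂ i| := by
      rw [← hkey]
      calc (∑ i, (w₁ i - m i) * f₁ i) - (∑ i, (w₂ i - m i) * f₂ i)
          ≤ |(∑ i, (w₁ i - m i) * f₁ i) - (∑ i, (w₂ i - m i) * f₂ i)| := le_abs_self _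
        _ ≤ _ := abs_sub _ _
    have h2 : Real.sqrt (t * (1 - t)) * Real.sqrt S₁ + Real.sqrt (t * (1 - t)) * Real.sqrt S₂
        ≤ Real.sqrt (t * (1 - t)) * (Real.sqrt L₁ + Real.sqrt L₂) := by
      rw [← mul_add]
      exact mul_le_mul_of_nonneg_left (add_le_add hS₁L hS₂L) (Real.sqrt_nonneg _)
    linarith
  have h1t : (0:ℝ) < 1 - t := by linarith
  have hne : (1:ℝ) - t ≠ 0 := ne_of_gt h1t
  have hsq_eq : Real.sqrt (t * (1 - t)) = Real.sqrt (t / (1 - t)) * (1 - t) := by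
    rw [show t * (1 - t) = (t / (1 - t)) * (1 - t) ^ 2 from by field_simp,
      Real.sqrt_mul (div_nonneg ht0 h1t0), Real.sqrt_sq h1t0]
  have hmono : Real.sqrt (t / (1 - t)) ≤ Real.sqrt (ζ / (1 - ζ)) := by
    apply Real.sqrt_le_sqrt
    rw [div_le_div_iff₀ h1t (by linarith : (0:ℝ) < 1 - ζ)]
    nlinarith
  have hfinal : ‖D‖ ≤ Real.sqrt (t / (1 - t)) * (Real.sqrt L₁ + Real.sqrt L₂) := by
    rw [hsq_eq] at hmain
    have h2 : (1 - t) * ‖D‖ ≤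
        (1 - t) * (Real.sqrt (t / (1 - t)) * (Real.sqrt L₁ + Real.sqrt L₂)) := by
      rw [show (1 - t) * (Real.sqrt (t / (1 - t)) * (Real.sqrt L₁ + Real.sqrt L₂)) =
        Real.sqrt (t / (1 - t)) * (1 - t) * (Real.sqrt L₁ + Real.sqrt L₂) from by ring]
      exact hmain
    exact le_of_mul_le_mul_left h2 h1t
  calc ‖x₁ - x₂‖ = ‖D‖ := rfl
    _ ≤ Real.sqrt (t / (1 - t)) * (Real.sqrt L₁ + Real.sqrt L₂) := hfinal
    _ ≤ Real.sqrt (ζ / (1 - ζ)) * (Real.sqrt L₁ + Real.sqrt L₂) :=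
        mul_le_mul_of_nonneg_right hmono (by positivity)
    _ = (Real.sqrt L₁ + Real.sqrt L₂) * Real.sqrt (ζ / (1 - ζ)) := mul_comm _ _
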